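/- Let V be a finite set of qubit sites and let Q† be any linear operator lying in the linear span of the operators ∏_{j∈Y} s†_j over subsets Y ⊆ V (the empty product being the identity operator). Then: (i) for every positive integer k and every k-local operator O, the iterated commutators defined by C₀ = O and C_{m+1} = C_m Q† − Q† C_m satisfy C_{2k+1} = 0; and (ii) for every positive integer k and every k-local operator H, if H (Q†)^q |0̄⟩ = 0 for every natural number q ≤ 2k, then H (Q†)^p |0̄⟩ = 0 for every natural number p. -/

import Mathlib

open scoped BigOperators
set_option linter.unusedSectionVars false

noncomputable section

/-- The state space of a collection of qubits indexed by `V`: the complex vector space of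
functions from configurations `V → Bool` to `ℂ`. -/
abbrev QState (V : Type*) := (V → Bool) → ℂ

section Defs

variable {V : Type*} [Fintype V] [DecidableEq V]

/-- The standard basis vector associated to the configuration `f`. -/
def basisVec (f : V → Bool) : QState V := fun g => if g = f then 1 else 0

/-- The creation operator `s†_i` at site `i`. -/
def creOp (i : V) : Module.End ℂ (QState V) where
  toFun ψ := fun g => if g i = true then ψ (Function.update g i false) else 0
  map_add' ψ φ := by funext g; by_cases h : g i = true <;> simp [h]
  map_smul' a ψ := by funext g; by_cases h : g i = true <;> simp [h]

/-- The annihilation operator `s_i` at site `i`. -/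
def annOp (i : V) : Module.End ℂ (QState V) where
  toFun ψ := fun g => if g i = false then ψ (Function.update g i true) else 0
  map_add' ψ φ := by funext g; by_cases h : g i = false <;> simp [h]
  map_smul' a ψ := by funext g; by_cases h : g i = false <;> simp [h]

@[simp] lemma creOp_apply (i : V) (ψ : QState V) (g : V → Bool) :
    creOp i ψ g = if g i = true then ψ (Function.update g i false) else 0 := rfl

variable (V)

/-- The vacuum `|0̄⟩`: the basis vector of the all-false configuration. -/
def vac : QState V := basisVec (fun _ => false)

/-- The total raising operator `S† = ∑ i, s†_i`. -/
def Sdag : Module.End ℂ (QState V) := ∑ i : V, creOp i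

/-- The number operator `N̂ = ∑ i, s†_i s_i`. -/
def numOp : Module.End ℂ (QState V) := ∑ i : V, creOp i * annOp i

/-- The unnormalized Dicke state `|W^p⟩ = (S†)^p |0̄⟩`. -/
def WState (p : ℕ) : QState V := ((Sdag V) ^ p) (vac V)

variable {V}

/-- Creation operators at different sites commute. -/
lemma creOp_commute (i j : V) : Commute (creOp (V := V) i) (creOp j) := by
  rcases eq_or_ne i j with rfl | hij
  · exact Commute.refl _
  · show creOp i * creOp j = creOp j * creOp i
    refine LinearMap.ext fun ψ => funext fun g => ?_
    simp only [Module.End.mul_apply, creOp_apply]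
    by_cases hi : g i = true <;> by_cases hj : g j = true <;>
      simp [hi, hj, Function.update_of_ne hij, Function.update_of_ne hij.symm,
        Function.update_comm hij]

/-- The product `∏_{j ∈ Y} s†_j` of creation operators over a finite set `Y` of sites
(the operators commute, so the product is well defined; the empty product is the identity). -/
def creProd (Y : Finset V) : Module.End ℂ (QState V) :=
  Y.noncommProd creOp fun a _ b _ _ => creOp_commute a b

/-- The operator `O` is supported on the set of sites `X`. -/
def SupportedOn (O : Module.End ℂ (QState V)) (X : Set V) : Prop :=
  (∀ f g : V → Bool, (∃ i ∉ X, f i ≠ g i) → O (basisVec f) g = 0) ∧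
  (∀ f f' g g' : V → Bool,
    (∀ i ∈ X, f i = f' i) → (∀ i ∈ X, g i = g' i) →
    (∀ i ∉ X, f i = g i) → (∀ i ∉ X, f' i = g' i) →
    O (basisVec f) g = O (basisVec f') g')

/-- An operator is `k`-local if it is a finite sum of operators each supported
on a subset of at most `k` sites. -/
def IsKLocal (k : ℕ) (O : Module.End ℂ (QState V)) : Prop :=
  ∃ (n : ℕ) (h : Fin n → Module.End ℂ (QState V)) (X : Fin n → Finset V),
    (∀ t, SupportedOn (h t) ↑(X t)) ∧ (∀ t, (X t).card ≤ k) ∧ O = ∑ t, h t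

/-- Vertices `i` and `j` are within distance `r` in the graph `G`:
they are joined by a walk of length at most `r`. -/
def WithinDist (G : SimpleGraph V) (r : ℕ) (i j : V) : Prop :=
  ∃ w : G.Walk i j, w.length ≤ r

/-- The ball of radius `r` around vertex `i` in the graph `G`. -/
def gball (G : SimpleGraph V) (i : V) (r : ℕ) : Set V := {j | WithinDist G r i j}

/-- `diam(X) ≤ R` with respect to `G`: every two vertices of `X` are within distance `R - 1`. -/
def GDiamLE (G : SimpleGraph V) (X : Finset V) (R : ℕ) : Prop :=
  ∀ i ∈ X, ∀ j ∈ X, WithinDist G (R - 1) i j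

/-- `H` is a Hamiltonian of range `R` with respect to the graph `G`: a finite sum over
nonempty subsets `X` with `diam(X) ≤ R` of operators supported on `X`. -/
def IsRangeHam (G : SimpleGraph V) (R : ℕ) (H : Module.End ℂ (QState V)) : Prop :=
  ∃ h : Finset V → Module.End ℂ (QState V),
    (∀ X, SupportedOn (h X) ↑X) ∧
    (∀ X, h X ≠ 0 → X.Nonempty ∧ GDiamLE G X R) ∧
    H = ∑ X : Finset V, h X

/-- `H` is a `k`-local Hamiltonian of range `R` with respect to the graph `G`. -/
def IsKLocalRangeHam (G : SimpleGraph V) (k R : ℕ) (H : Module.End ℂ (QState V)) : Prop :=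
  ∃ h : Finset V → Module.End ℂ (QState V),
    (∀ X, SupportedOn (h X) ↑X) ∧
    (∀ X, h X ≠ 0 → X.Nonempty ∧ GDiamLE G X R ∧ X.card ≤ k) ∧
    H = ∑ X : Finset V, h X

/-- An invertible linear operator `M` is `δ`-locality-preserving with respect to `G` if
conjugation by `M` or `M⁻¹` increases the range of any operator by at most `δ`. -/
def LocalityPreserving (G : SimpleGraph V) (δ : ℕ) (M : QState V ≃ₗ[ℂ] QState V) : Prop :=
  ∀ R : ℕ, 0 < R → ∀ O : Module.End ℂ (QState V), IsRangeHam G R O →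
    IsRangeHam G (R + δ) (M.toLinearMap ∘ₗ O ∘ₗ M.symm.toLinearMap) ∧
    IsRangeHam G (R + δ) (M.symm.toLinearMap ∘ₗ O ∘ₗ M.toLinearMap)

end Defs

section Chain

/-- Distance between two sites of the open chain `{0, …, N-1}`. -/
def chainDist {N : ℕ} (i j : Fin N) : ℕ := ((i : ℤ) - (j : ℤ)).natAbs

/-- `diam(X) ≤ R` on the open chain: `diam(X) = 1 + max |i - j|`. -/
def ChainDiamLE {N : ℕ} (X : Finset (Fin N)) (R : ℕ) : Prop :=
  ∀ i ∈ X, ∀ j ∈ X, chainDist i j + 1 ≤ R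

/-- `H` is a Hamiltonian of range `R` on the open chain of `N` sites. -/
def IsChainRangeHam {N : ℕ} (R : ℕ) (H : Module.End ℂ (QState (Fin N))) : Prop :=
  ∃ h : Finset (Fin N) → Module.End ℂ (QState (Fin N)),
    (∀ X, SupportedOn (h X) ↑X) ∧
    (∀ X, h X ≠ 0 → X.Nonempty ∧ ChainDiamLE X R) ∧
    H = ∑ X : Finset (Fin N), h X

/-- `H` is a `k`-local Hamiltonian of range `R` on the open chain of `N` sites. -/
def IsChainKLocalRangeHam {N : ℕ} (k R : ℕ) (H : Module.End ℂ (QState (Fin N))) : Prop :=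
  ∃ h : Finset (Fin N) → Module.End ℂ (QState (Fin N)),
    (∀ X, SupportedOn (h X) ↑X) ∧
    (∀ X, h X ≠ 0 → X.Nonempty ∧ ChainDiamLE X R ∧ X.card ≤ k) ∧
    H = ∑ X : Finset (Fin N), h X

end Chain

end

noncomputable section AuxSection

open Finset in
section

variable {V : Type*} [Fintype V] [DecidableEq V]

lemma creOp_sq (i : V) : creOp (V := V) i * creOp i = 0 := by
  refine LinearMap.ext fun ψ => funext fun g => ?_
  simp only [Module.End.mul_apply, creOp_apply, LinearMap.zero_apply, Pi.zero_apply]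
  by_cases h : g i = true <;> simp [h, Function.update_self]

lemma creOp_pow_two_add (i : V) (m : ℕ) : (creOp (V := V) i) ^ (m + 2) = 0 := by
  rw [pow_succ, pow_succ, mul_assoc, creOp_sq]
  simp

lemma creOp_creProd_commute (i : V) (Y : Finset V) :
    Commute (creOp (V := V) i) (creProd Y) :=
  Finset.noncommProd_commute _ _ _ _ fun j _ => creOp_commute i j

lemma creProd_commute_creProd (Y Z : Finset V) :
    Commute (creProd (V := V) Y) (creProd Z) :=
  Finset.noncommProd_commute _ _ _ _ fun j _ => (creOp_creProd_commute j Y).symm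

lemma creProd_insert {i : V} {Y : Finset V} (hi : i ∉ Y) :
    creProd (V := V) (insert i Y) = creOp i * creProd Y :=
  Finset.noncommProd_insert_of_notMem _ _ _ _ hi

lemma creProd_eq_mul_erase {i : V} {Y : Finset V} (hi : i ∈ Y) :
    creProd (V := V) Y = creOp i * creProd (Y.erase i) := by
  conv_lhs => rw [← Finset.insert_erase hi]
  exact creProd_insert (Finset.notMem_erase _ _)

lemma qstate_eq_sum (ψ : QState V) : ψ = ∑ f : V → Bool, ψ f • basisVec f := by
  funext g
  simp only [Finset.sum_apply, Pi.smul_apply, basisVec, smul_eq_mul, mul_ite, mul_one,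
    mul_zero]
  rw [Finset.sum_ite_eq Finset.univ g ψ]
  simp

lemma end_ext_basis {T T' : Module.End ℂ (QState V)}
    (h : ∀ f, T (basisVec f) = T' (basisVec f)) : T = T' := by
  refine LinearMap.ext fun ψ => ?_
  rw [qstate_eq_sum ψ, map_sum, map_sum]
  simp only [map_smul, h]

lemma SupportedOn.commute_creOp {O : Module.End ℂ (QState V)} {X : Set V}
    (hO : SupportedOn O X) {i : V} (hi : i ∉ X) : Commute O (creOp i) := by
  obtain ⟨h1, h2⟩ := hO
  refine end_ext_basis fun f => funext fun g => ?_
  simp only [Module.End.mul_apply]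
  by_cases hf : f i = false
  · -- creOp i (basisVec f) = basisVec (update f i true)
    have hcre : creOp i (basisVec f) = basisVec (Function.update f i true) := by
      funext g'
      simp only [creOp_apply, basisVec]
      by_cases hg' : g' i = true
      · simp only [hg', if_true]
        have hiff : (Function.update g' i false = f) ↔ (g' = Function.update f i true) := by
          constructor
          · intro h
            funext j
            by_cases hj : j = i
            · subst hj; simp [hg']
            · rw [Function.update_of_ne hj]
              have := congrFun h j
              rw [Function.update_of_ne hj] at this
              exact this
          · intro h
            funext j
            by_cases hj : j = i
            · subst hj; simp [hf]
            · rw [Function.update_of_ne hj]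
              have := congrFun h j
              rw [Function.update_of_ne hj] at this
              exact this
        simp only [hiff]
      · simp only [hg', if_false]
        have hne : ¬ (g' = Function.update f i true) := by
          intro h
          apply hg'
          rw [h, Function.update_self]
        rw [if_neg hne]
        simp
    rw [hcre]
    by_cases hg : g i = true
    · -- RHS g = O (basisVec f) (update g i false)
      have hrhs : creOp i (O (basisVec f)) g = O (basisVec f) (Function.update g i false) := by
        simp [hg]
      rw [hrhs]
      by_cases hfg : ∀ j, j ∉ X → j ≠ i → f j = g j
      · refine h2 (Function.update f i true) f g (Function.update g i false) ?_ ?_ ?_ ?_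
        · intro j hj
          refine Function.update_of_ne ?_ _ _
          rintro rfl; exact hi hj
        · intro j hj
          refine (Function.update_of_ne ?_ _ _).symm
          rintro rfl; exact hi hj
        · intro j hj
          by_cases hji : j = i
          · subst hji; simp [hg]
          · rw [Function.update_of_ne hji]; exact hfg j hj hji
        · intro j hj
          by_cases hji : j = i
          · subst hji; simp [hf]
          · rw [Function.update_of_ne hji]; exact hfg j hj hji
      · push_neg at hfg
        obtain ⟨j, hjX, hji, hj⟩ := hfg
        rw [h1 _ _ ⟨j, hjX, by rwa [Function.update_of_ne hji]⟩,
            h1 _ _ ⟨j, hjX, by rwa [Function.update_of_ne hji]⟩]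
    · -- g i = false; both sides zero
      have hlhs : O (basisVec (Function.update f i true)) g = 0 := by
        refine h1 _ _ ⟨i, hi, ?_⟩
        rw [Function.update_self]
        intro h
        exact hg h.symm
      rw [hlhs]
      simp [hg]
  · -- f i = true : creOp i kills basisVec f
    have hcre : creOp i (basisVec f) = 0 := by
      funext g'
      simp only [creOp_apply, basisVec, Pi.zero_apply]
      by_cases hg' : g' i = true
      · simp only [hg', if_true]
        have hne : ¬ (Function.update g' i false = f) := by
          intro h
          have := congrFun h i
          rw [Function.update_self] at this
          rw [← this] at hf
          exact hf rfl
        rw [if_neg hne]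
      · simp [hg']
    rw [hcre, map_zero]
    simp only [creOp_apply, Pi.zero_apply]
    by_cases hg : g i = true
    · simp only [hg, if_true]
      refine (h1 f (Function.update g i false) ⟨i, hi, ?_⟩).symm
      rw [Function.update_self]
      intro h
      rw [h] at hf
      exact hf rfl
    · simp [hg]

lemma SupportedOn.commute_creProd {O : Module.End ℂ (QState V)} {X : Finset V}
    (hO : SupportedOn O ↑X) {Y : Finset V} (hYX : ∀ j ∈ Y, j ∉ X) :
    Commute O (creProd Y) :=
  Finset.noncommProd_commute _ _ _ _ fun j hj =>
    hO.commute_creOp (by simpa using hYX j hj)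

/-- The iterated commutator `C_{n+1} = C_n a - a C_n` starting from `x`. -/
def iterAd (a x : Module.End ℂ (QState V)) : ℕ → Module.End ℂ (QState V)
  | 0 => x
  | n + 1 => iterAd a x n * a - a * iterAd a x n

@[simp] lemma iterAd_zero (a x : Module.End ℂ (QState V)) : iterAd a x 0 = x := rfl

lemma iterAd_succ (a x : Module.End ℂ (QState V)) (n : ℕ) :
    iterAd a x (n + 1) = iterAd a x n * a - a * iterAd a x n := rfl

lemma iterAd_sum {ι : Type*} (a : Module.End ℂ (QState V)) (s : Finset ι)
    (x : ι → Module.End ℂ (QState V)) (n : ℕ) :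
    iterAd a (∑ t ∈ s, x t) n = ∑ t ∈ s, iterAd a (x t) n := by
  induction n with
  | zero => rfl
  | succ n ih =>
      simp only [iterAd_succ, ih, Finset.sum_mul, Finset.mul_sum, Finset.sum_sub_distrib]

lemma Commute.iterAd_right {a b x : Module.End ℂ (QState V)} (hbx : Commute b x)
    (hba : Commute b a) (n : ℕ) : Commute b (iterAd a x n) := by
  induction n with
  | zero => exact hbx
  | succ n ih => exact (ih.mul_right hba).sub_right (hba.mul_right ih)

lemma iterAd_add_eq {a b x : Module.End ℂ (QState V)} (hbx : Commute b x)
    (hba : Commute b a) (n : ℕ) : iterAd (a + b) x n = iterAd a x n := by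
  induction n with
  | zero => rfl
  | succ n ih =>
      have hcomm : Commute b (iterAd a x n) := hbx.iterAd_right hba n
      simp only [iterAd_succ, ih, mul_add, add_mul]
      rw [hcomm.eq]
      abel

lemma iterAd_mem_span (a x : Module.End ℂ (QState V)) (n : ℕ) :
    iterAd a x n ∈
      Submodule.span ℂ {z : Module.End ℂ (QState V) | ∃ j ≤ n, z = a ^ j * x * a ^ (n - j)} := by
  induction n with
  | zero =>
      apply Submodule.subset_span
      exact ⟨0, le_refl 0, by simp⟩
  | succ n ih =>
      rw [iterAd_succ]
      set Sn1 : Set (Module.End ℂ (QState V)) :=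
        {z | ∃ j ≤ n + 1, z = a ^ j * x * a ^ (n + 1 - j)} with hSn1
      have h1 : iterAd a x n * a ∈ Submodule.span ℂ Sn1 := by
        refine Submodule.span_induction (p := fun z _ => z * a ∈ Submodule.span ℂ Sn1)
          ?_ ?_ ?_ ?_ ih
        · rintro z ⟨j, hj, rfl⟩
          apply Submodule.subset_span
          refine ⟨j, by omega, ?_⟩
          rw [mul_assoc, ← pow_succ]
          congr 2
          omega
        · simp
        · intro y z _ _ hy hz
          rw [add_mul]; exact Submodule.add_mem _ hy hz
        · intro c z _ hz
          rw [smul_mul_assoc]; exact Submodule.smul_mem _ _ hz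
      have h2 : a * iterAd a x n ∈ Submodule.span ℂ Sn1 := by
        refine Submodule.span_induction (p := fun z _ => a * z ∈ Submodule.span ℂ Sn1)
          ?_ ?_ ?_ ?_ ih
        · rintro z ⟨j, hj, rfl⟩
          apply Submodule.subset_span
          refine ⟨j + 1, by omega, ?_⟩
          rw [← mul_assoc, ← mul_assoc, ← pow_succ']
          congr 2
          omega
        · simp
        · intro y z _ _ hy hz
          rw [mul_add]; exact Submodule.add_mem _ hy hz
        · intro c z _ hz
          rw [mul_smul_comm]; exact Submodule.smul_mem _ _ hz
      exact Submodule.sub_mem _ h1 h2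

lemma iterAd_eq_zero_of_pow_zero {a x : Module.End ℂ (QState V)} {k : ℕ}
    (ha : a ^ (k + 1) = 0) : iterAd a x (2 * k + 1) = 0 := by
  have hpow : ∀ m, k + 1 ≤ m → a ^ m = 0 := by
    intro m hm
    rw [show m = (k + 1) + (m - (k + 1)) by omega, pow_add, ha, zero_mul]
  have hset : {z : Module.End ℂ (QState V) |
      ∃ j ≤ 2 * k + 1, z = a ^ j * x * a ^ (2 * k + 1 - j)} ⊆ {0} := by
    rintro z ⟨j, hj, rfl⟩
    by_cases hjk : k + 1 ≤ j
    · simp [hpow j hjk]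
    · have : k + 1 ≤ 2 * k + 1 - j := by omega
      simp [hpow _ this]
  have := iterAd_mem_span a x (2 * k + 1)
  have hle := Submodule.span_mono (R := ℂ) hset
  rw [Submodule.span_zero_singleton] at hle
  simpa using hle this

lemma filterA_pow_eq_zero (X : Finset V) :
    ∀ c : Finset V → ℂ,
      (∑ Y ∈ Finset.univ.filter (fun Y : Finset V => (Y ∩ X).Nonempty),
        c Y • creProd (V := V) Y) ^ (X.card + 1) = 0 := by
  induction X using Finset.induction_on with
  | empty =>
      intro c
      simp [Finset.not_nonempty_empty]
  | @insert i s hi ih =>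
      intro c
      set A := ∑ Y ∈ Finset.univ.filter
          (fun Y : Finset V => (Y ∩ insert i s).Nonempty), c Y • creProd (V := V) Y with hA
      -- split the sum by membership of i in Y
      have hsplit :
          A = (∑ Y ∈ (Finset.univ.filter
                (fun Y : Finset V => (Y ∩ insert i s).Nonempty)).filter (fun Y => i ∈ Y),
              c Y • creProd (V := V) Y)
            + ∑ Y ∈ (Finset.univ.filter
                (fun Y : Finset V => (Y ∩ insert i s).Nonempty)).filter (fun Y => i ∉ Y),
              c Y • creProd (V := V) Y := by
        rw [hA, ← Finset.sum_filter_add_sum_filter_not _ (fun Y => i ∈ Y)]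
      set P := ∑ Y ∈ (Finset.univ.filter
            (fun Y : Finset V => (Y ∩ insert i s).Nonempty)).filter (fun Y => i ∈ Y),
          c Y • creProd (V := V) Y with hP
      set Q := ∑ Y ∈ (Finset.univ.filter
            (fun Y : Finset V => (Y ∩ insert i s).Nonempty)).filter (fun Y => i ∉ Y),
          c Y • creProd (V := V) Y with hQ
      -- P = creOp i * R
      set R := ∑ Y ∈ (Finset.univ.filter
            (fun Y : Finset V => (Y ∩ insert i s).Nonempty)).filter (fun Y => i ∈ Y),
          c Y • creProd (V := V) (Y.erase i) with hR
      have hPR : P = creOp i * R := by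
        rw [hP, hR, Finset.mul_sum]
        refine Finset.sum_congr rfl fun Y hY => ?_
        simp only [Finset.mem_filter] at hY
        rw [creProd_eq_mul_erase hY.2, mul_smul_comm]
      -- Q equals a sum of the shape handled by the inductive hypothesis
      have hQ' : Q = ∑ Y ∈ Finset.univ.filter (fun Y : Finset V => (Y ∩ s).Nonempty),
          (if i ∈ Y then 0 else c Y) • creProd (V := V) Y := by
        rw [hQ]
        rw [Finset.sum_filter, Finset.sum_filter, Finset.sum_filter]
        refine Finset.sum_congr rfl fun Y _ => ?_
        by_cases hiY : i ∈ Y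
        · simp [hiY]
        · have : Y ∩ insert i s = Y ∩ s := by
            rw [Finset.inter_insert_of_notMem hiY]
          simp [hiY, this]
      have hQpow : Q ^ (s.card + 1) = 0 := by
        rw [hQ']
        exact ih _
      -- commutation facts
      have hcomm_iQ : Commute (creOp (V := V) i) Q := by
        refine Commute.sum_right _ _ _ fun Y _ => ?_
        exact (creOp_creProd_commute i Y).smul_right _
      have hcomm_RQ : Commute R Q := by
        refine Commute.sum_right _ _ _ fun Y _ => ?_
        refine Commute.sum_left _ _ _ fun Z _ => ?_
        exact ((creProd_commute_creProd _ _).smul_left _).smul_right _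
      have hcomm_iR : Commute (creOp (V := V) i) R := by
        refine Commute.sum_right _ _ _ fun Y _ => ?_
        exact (creOp_creProd_commute i _).smul_right _
      have hcomm : Commute (creOp (V := V) i * R) Q := hcomm_iQ.mul_left hcomm_RQ
      rw [hsplit, hPR, Finset.card_insert_of_notMem hi]
      rw [hcomm.add_pow]
      refine Finset.sum_eq_zero fun m hm => ?_
      match m with
      | 0 =>
          have h0 : Q ^ (s.card + 1 + 1 - 0) = 0 := by
            have he : s.card + 1 + 1 - 0 = (s.card + 1) + 1 := by omega
            rw [he, pow_succ, hQpow, zero_mul]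
          rw [h0, mul_zero, zero_mul]
      | 1 =>
          have h1 : Q ^ (s.card + 1 + 1 - 1) = 0 := by
            have he : s.card + 1 + 1 - 1 = s.card + 1 := by omega
            rw [he, hQpow]
          rw [h1, mul_zero, zero_mul]
      | (m + 2) =>
          have hpow : (creOp (V := V) i * R) ^ (m + 2) = 0 := by
            rw [hcomm_iR.mul_pow, creOp_pow_two_add, zero_mul]
          rw [hpow, zero_mul, zero_mul]

lemma iterAd_eq_zero_of_supported (Qd : Module.End ℂ (QState V)) (c : Finset V → ℂ)
    (hQd : Qd = ∑ Y : Finset V, c Y • creProd Y) (k : ℕ)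
    (O : Module.End ℂ (QState V)) (X : Finset V) (hsupp : SupportedOn O ↑X)
    (hcard : X.card ≤ k) : iterAd Qd O (2 * k + 1) = 0 := by
  set A := ∑ Y ∈ Finset.univ.filter (fun Y : Finset V => (Y ∩ X).Nonempty),
      c Y • creProd (V := V) Y with hA
  set B := ∑ Y ∈ Finset.univ.filter (fun Y : Finset V => ¬(Y ∩ X).Nonempty),
      c Y • creProd (V := V) Y with hB
  have hQd' : Qd = A + B := by
    rw [hQd, hA, hB, Finset.sum_filter_add_sum_filter_not]
  have hBO : Commute B O := by
    refine Commute.sum_left _ _ _ fun Y hY => ?_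
    simp only [Finset.mem_filter, Finset.not_nonempty_iff_eq_empty] at hY
    refine Commute.smul_left ?_ _
    refine (hsupp.commute_creProd fun j hjY hjX => ?_).symm
    have : j ∈ Y ∩ X := Finset.mem_inter.mpr ⟨hjY, hjX⟩
    rw [hY.2] at this
    exact absurd this (Finset.notMem_empty j)
  have hBA : Commute B A := by
    refine Commute.sum_left _ _ _ fun Y _ => ?_
    refine Commute.sum_right _ _ _ fun Z _ => ?_
    exact ((creProd_commute_creProd _ _).smul_left _).smul_right _
  have hApow : A ^ (k + 1) = 0 := by
    have h1 := filterA_pow_eq_zero X c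
    have : A ^ (k + 1) = A ^ (X.card + 1) * A ^ (k - X.card) := by
      rw [← pow_add]
      congr 1
      omega
    rw [this, ← hA] at *
    rw [h1, zero_mul]
  rw [hQd', iterAd_add_eq hBO hBA]
  exact iterAd_eq_zero_of_pow_zero hApow

lemma mul_pow_eq_sum_iterAd (a x : Module.End ℂ (QState V)) (p : ℕ) :
    x * a ^ p = ∑ m ∈ Finset.range (p + 1),
      ((p.choose m : ℂ)) • (a ^ (p - m) * iterAd a x m) := by
  induction p with
  | zero => simp
  | succ p ih =>
      have step : x * a ^ (p + 1) = (x * a ^ p) * a := by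
        rw [mul_assoc, ← pow_succ]
      rw [step, ih, Finset.sum_mul]
      have hterm : ∀ m ∈ Finset.range (p + 1),
          ((p.choose m : ℂ)) • (a ^ (p - m) * iterAd a x m) * a
            = ((p.choose m : ℂ)) • (a ^ (p + 1 - m) * iterAd a x m)
              + ((p.choose m : ℂ)) • (a ^ (p - m) * iterAd a x (m + 1)) := by
        intro m hm
        have hmle : m ≤ p := by
          simpa [Nat.lt_succ_iff] using Finset.mem_range.mp hm
        have hsucc : iterAd a x m * a = a * iterAd a x m + iterAd a x (m + 1) := by
          rw [iterAd_succ]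
          abel
        rw [smul_mul_assoc, mul_assoc, hsucc, mul_add, ← mul_assoc, ← pow_succ, smul_add,
          show p - m + 1 = p + 1 - m by omega]
      rw [Finset.sum_congr rfl hterm, Finset.sum_add_distrib]
      -- now massage the target
      rw [Finset.sum_range_succ' (fun m => ((p + 1).choose m : ℂ) •
            (a ^ (p + 1 - m) * iterAd a x m)) (p + 1)]
      have htail : ∀ m ∈ Finset.range (p + 1),
          (((p + 1).choose (m + 1) : ℂ)) • (a ^ (p + 1 - (m + 1)) * iterAd a x (m + 1))
            = ((p.choose m : ℂ)) • (a ^ (p - m) * iterAd a x (m + 1))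
              + ((p.choose (m + 1) : ℂ)) • (a ^ (p - m) * iterAd a x (m + 1)) := by
        intro m hm
        have h1 : (p + 1).choose (m + 1) = p.choose m + p.choose (m + 1) :=
          Nat.choose_succ_succ p m
        have h2 : p + 1 - (m + 1) = p - m := by omega
        rw [h2, h1]
        push_cast
        rw [add_smul]
      rw [Finset.sum_congr rfl htail, Finset.sum_add_distrib]
      have hextra : (∑ m ∈ Finset.range (p + 1),
          ((p.choose (m + 1) : ℂ)) • (a ^ (p - m) * iterAd a x (m + 1)))
            + (((p + 1).choose 0 : ℂ)) • (a ^ (p + 1 - 0) * iterAd a x 0)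
          = ∑ m ∈ Finset.range (p + 1),
            ((p.choose m : ℂ)) • (a ^ (p + 1 - m) * iterAd a x m) := by
      -- RHS = sum over range (p+2) since the top term vanishes
        have hlast : ((p.choose (p + 1) : ℂ)) •
            (a ^ (p + 1 - (p + 1)) * iterAd a x (p + 1)) = 0 := by
          simp [Nat.choose_eq_zero_of_lt (Nat.lt_succ_self p)]
        have hsum : ∑ m ∈ Finset.range (p + 1 + 1),
            ((p.choose m : ℂ)) • (a ^ (p + 1 - m) * iterAd a x m)
              = ∑ m ∈ Finset.range (p + 1),
                ((p.choose m : ℂ)) • (a ^ (p + 1 - m) * iterAd a x m) := by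
          rw [Finset.sum_range_succ, hlast, add_zero]
        rw [← hsum, Finset.sum_range_succ' (fun m => ((p.choose m : ℂ)) •
            (a ^ (p + 1 - m) * iterAd a x m)) (p + 1)]
        congr 1
        · refine Finset.sum_congr rfl fun m hm => ?_
          rw [show p + 1 - (m + 1) = p - m by omega]
        · simp
      rw [← hextra]
      abel

end

end AuxSection

/-- For any `Q†` in the span of products of creation operators:
(i) the (2k+1)-fold iterated commutator of any k-local operator with `Q†` vanishes, and
(ii) a k-local operator annihilating `(Q†)^q |0̄⟩` for all `q ≤ 2k` annihilates the
whole tower. -/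
theorem product_raising_operator_properties
    {V : Type*} [Fintype V] [DecidableEq V]
    (Qd : Module.End ℂ (QState V))
    (hQd : Qd ∈ Submodule.span ℂ (Set.range fun Y : Finset V => creProd Y)) :
    (∀ k : ℕ, 0 < k → ∀ O : Module.End ℂ (QState V), IsKLocal k O →
      ∀ C : ℕ → Module.End ℂ (QState V), C 0 = O →
        (∀ m, C (m + 1) = C m * Qd - Qd * C m) → C (2 * k + 1) = 0) ∧
    (∀ k : ℕ, 0 < k → ∀ H : Module.End ℂ (QState V), IsKLocal k H →
      (∀ q ≤ 2 * k, H ((Qd ^ q) (vac V)) = 0) → ∀ p : ℕ, H ((Qd ^ p) (vac V)) = 0) := by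
  obtain ⟨c, hc⟩ := (Submodule.mem_span_range_iff_exists_fun ℂ).mp hQd
  have hQdc : Qd = ∑ Y : Finset V, c Y • creProd Y := hc.symm
  have key : ∀ k : ℕ, 0 < k → ∀ O : Module.End ℂ (QState V), IsKLocal k O →
      ∀ C : ℕ → Module.End ℂ (QState V), C 0 = O →
        (∀ m, C (m + 1) = C m * Qd - Qd * C m) → C (2 * k + 1) = 0 := by
    intro k hk O hO C hC0 hCrec
    have hCiter : ∀ m, C m = iterAd Qd O m := by
      intro m
      induction m with
      | zero => exact hC0
      | succ m ih => rw [hCrec, ih, iterAd_succ]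
    rw [hCiter]
    obtain ⟨n, h, Xs, hsupp, hcard, rfl⟩ := hO
    rw [iterAd_sum]
    refine Finset.sum_eq_zero fun t _ => ?_
    exact iterAd_eq_zero_of_supported Qd c hQdc k (h t) (Xs t) (hsupp t) (hcard t)
  refine ⟨key, ?_⟩
  intro k hk H hH hvac p
  have hC2k1 : iterAd Qd H (2 * k + 1) = 0 :=
    key k hk H hH (iterAd Qd H) rfl (fun m => rfl)
  have hCzero : ∀ m, 2 * k + 1 ≤ m → iterAd Qd H m = 0 := by
    intro m hm
    induction m with
    | zero => omega
    | succ m ih =>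
        rcases Nat.lt_or_ge (2 * k + 1) (m + 1) with hlt | hge
        · have h0 := ih (by omega)
          rw [iterAd_succ, h0, zero_mul, mul_zero, sub_zero]
        · have he : m + 1 = 2 * k + 1 := by omega
          rw [he]
          exact hC2k1
  have hCvac : ∀ m, iterAd Qd H m (vac V) = 0 := by
    intro m
    induction m using Nat.strong_induction_on with
    | _ m ih =>
      by_cases hm : m ≤ 2 * k
      · have happ := congrArg (fun T : Module.End ℂ (QState V) => T (vac V))
          (mul_pow_eq_sum_iterAd Qd H m)
        simp only [Module.End.mul_apply, LinearMap.sum_apply, LinearMap.smul_apply] at happ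
        rw [hvac m hm, Finset.sum_range_succ] at happ
        have hsmall : ∑ r ∈ Finset.range m,
            ((m.choose r : ℂ)) • (Qd ^ (m - r)) ((iterAd Qd H r) (vac V)) = 0 := by
          refine Finset.sum_eq_zero fun r hr => ?_
          rw [ih r (Finset.mem_range.mp hr), map_zero, smul_zero]
        rw [hsmall, zero_add, Nat.sub_self, pow_zero, Nat.choose_self] at happ
        simpa using happ.symm
      · rw [hCzero m (by omega)]
        simp
  have hid := congrArg (fun T : Module.End ℂ (QState V) => T (vac V))
    (mul_pow_eq_sum_iterAd Qd H p)
  simp only [Module.End.mul_apply, LinearMap.sum_apply, LinearMap.smul_apply] at hid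
  rw [hid]
  refine Finset.sum_eq_zero fun r _ => ?_
  rw [hCvac r, map_zero, smul_zero]
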